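/- Let ℓ > 0 and let u : [0,ℓ] → ℂ be four times continuously differentiable with u'(ℓ) = 0, and set q(x) = x − ℓ. Then Re(∫₀^ℓ u''''(x)·q(x)·conj(u'(x)) dx) = ℓ·Re(u'''(0)·conj(u'(0))) + Re(u''(0)·conj(u'(0))) + (3/2)·∫₀^ℓ |u''(x)|² dx − (ℓ/2)·|u''(0)|². -/

import Mathlib

set_option maxRecDepth 4000


open MeasureTheory ComplexConjugate

open Set intervalIntegral in
private lemma ibp_aux {E : Type*} [NormedAddCommGroup E] [NormedSpace ℝ E] [CompleteSpace E]
    {ℓ : ℝ} (hℓ : 0 ≤ ℓ) {f f' : ℝ → E}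
    (hf : ∀ x ∈ Icc (0:ℝ) ℓ, HasDerivWithinAt f (f' x) (Icc 0 ℓ) x)
    (hint : IntervalIntegrable f' volume 0 ℓ) :
    ∫ x in (0:ℝ)..ℓ, f' x = f ℓ - f 0 := by
  refine integral_eq_sub_of_hasDeriv_right_of_le hℓ
    (fun x hx => (hf x hx).continuousWithinAt)
    (fun x hx => (hf x (mem_Icc_of_Ioo hx)).mono_of_mem_nhdsWithin
      (Filter.mem_of_superset (Ioc_mem_nhdsGT_of_mem ⟨le_rfl, hx.2⟩)
        (Ioc_subset_Icc_self.trans (Icc_subset_Icc hx.1.le le_rfl))))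
    hint

/-- The multiplier (integration-by-parts) identity for the Euler–Bernoulli operator with
multiplier `q(x) = x − ℓ`: if `u : [0,ℓ] → ℂ` is four times continuously differentiable with
`u'(ℓ) = 0`, then
`Re ∫₀^ℓ u'''' q conj(u') dx
  = ℓ Re(u'''(0) conj(u'(0))) + Re(u''(0) conj(u'(0))) + (3/2) ∫₀^ℓ |u''|² − (ℓ/2)|u''(0)|²`. -/
theorem multiplier_identity (ℓ : ℝ) (hℓ : 0 < ℓ)
    (u u1 u2 u3 u4 : ℝ → ℂ)
    (hu1 : ∀ x ∈ Set.Icc (0:ℝ) ℓ, HasDerivWithinAt u (u1 x) (Set.Icc 0 ℓ) x)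
    (hu2 : ∀ x ∈ Set.Icc (0:ℝ) ℓ, HasDerivWithinAt u1 (u2 x) (Set.Icc 0 ℓ) x)
    (hu3 : ∀ x ∈ Set.Icc (0:ℝ) ℓ, HasDerivWithinAt u2 (u3 x) (Set.Icc 0 ℓ) x)
    (hu4 : ∀ x ∈ Set.Icc (0:ℝ) ℓ, HasDerivWithinAt u3 (u4 x) (Set.Icc 0 ℓ) x)
    (hu4c : ContinuousOn u4 (Set.Icc 0 ℓ))
    (hbc : u1 ℓ = 0) :
    (∫ x in (0:ℝ)..ℓ, u4 x * ((x : ℂ) - (ℓ : ℂ)) * conj (u1 x)).re =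
      ℓ * (u3 0 * conj (u1 0)).re + (u2 0 * conj (u1 0)).re +
        (3 / 2) * (∫ x in (0:ℝ)..ℓ, ‖u2 x‖ ^ 2) - (ℓ / 2) * ‖u2 0‖ ^ 2 := by
  have huIcc : Set.uIcc (0:ℝ) ℓ = Set.Icc 0 ℓ := Set.uIcc_of_le hℓ.le
  -- continuity
  have hc1 : ContinuousOn u1 (Set.Icc (0:ℝ) ℓ) := fun x hx => (hu2 x hx).continuousWithinAt
  have hc2 : ContinuousOn u2 (Set.Icc (0:ℝ) ℓ) := fun x hx => (hu3 x hx).continuousWithinAt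
  have hc3 : ContinuousOn u3 (Set.Icc (0:ℝ) ℓ) := fun x hx => (hu4 x hx).continuousWithinAt
  have hcq : ContinuousOn (fun x : ℝ => (x:ℂ) - (ℓ:ℂ)) (Set.Icc (0:ℝ) ℓ) :=
    (Complex.continuous_ofReal.sub continuous_const).continuousOn
  have hcc1 : ContinuousOn (fun x => conj (u1 x)) (Set.Icc (0:ℝ) ℓ) :=
    Complex.continuous_conj.comp_continuousOn hc1
  have hcc2 : ContinuousOn (fun x => conj (u2 x)) (Set.Icc (0:ℝ) ℓ) :=
    Complex.continuous_conj.comp_continuousOn hc2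
  -- integrability
  have hIA : IntervalIntegrable (fun x => u4 x * ((x:ℂ) - (ℓ:ℂ)) * conj (u1 x)) volume 0 ℓ := by
    apply ContinuousOn.intervalIntegrable; rw [huIcc]; exact (hu4c.mul hcq).mul hcc1
  have hIB : IntervalIntegrable (fun x => u3 x * conj (u1 x)) volume 0 ℓ := by
    apply ContinuousOn.intervalIntegrable; rw [huIcc]; exact hc3.mul hcc1
  have hIC : IntervalIntegrable (fun x => u3 x * ((x:ℂ) - (ℓ:ℂ)) * conj (u2 x)) volume 0 ℓ := by
    apply ContinuousOn.intervalIntegrable; rw [huIcc]; exact (hc3.mul hcq).mul hcc2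
  have hID : IntervalIntegrable (fun x => u2 x * conj (u2 x)) volume 0 ℓ := by
    apply ContinuousOn.intervalIntegrable; rw [huIcc]; exact hc2.mul hcc2
  have hIJ : IntervalIntegrable (fun x => ‖u2 x‖ ^ 2) volume 0 ℓ := by
    apply ContinuousOn.intervalIntegrable; rw [huIcc]
    exact (hc2.norm.pow 2)
  have hIK : IntervalIntegrable (fun x => (x - ℓ) * (2 * (u3 x * conj (u2 x)).re)) volume 0 ℓ := by
    apply ContinuousOn.intervalIntegrable; rw [huIcc]
    exact ((continuous_id.sub continuous_const).continuousOn).mul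
      ((continuous_const.continuousOn).mul
        (Complex.continuous_re.comp_continuousOn (hc3.mul hcc2)))
  -- derivatives
  have hq : ∀ x : ℝ, HasDerivWithinAt (fun y : ℝ => (y:ℂ) - (ℓ:ℂ)) 1 (Set.Icc (0:ℝ) ℓ) x := by
    intro x
    have h1 : HasDerivAt (fun y : ℝ => (y:ℂ)) (((1:ℝ)):ℂ) x := (hasDerivAt_id x).ofReal_comp
    have h2 : HasDerivAt (fun y : ℝ => (y:ℂ) - (ℓ:ℂ)) (((1:ℝ)):ℂ) x := h1.sub_const _
    exact (Complex.ofReal_one ▸ h2).hasDerivWithinAt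
  have hconj1 : ∀ x ∈ Set.Icc (0:ℝ) ℓ,
      HasDerivWithinAt (fun y => conj (u1 y)) (conj (u2 x)) (Set.Icc (0:ℝ) ℓ) x := by
    intro x hx; exact (hu2 x hx).star
  have hconj2 : ∀ x ∈ Set.Icc (0:ℝ) ℓ,
      HasDerivWithinAt (fun y => conj (u2 y)) (conj (u3 x)) (Set.Icc (0:ℝ) ℓ) x := by
    intro x hx; exact (hu3 x hx).star
  -- first IBP
  have e1 : (∫ x in (0:ℝ)..ℓ, u4 x * ((x:ℂ) - (ℓ:ℂ)) * conj (u1 x)) +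
      (∫ x in (0:ℝ)..ℓ, u3 x * conj (u1 x)) +
      (∫ x in (0:ℝ)..ℓ, u3 x * ((x:ℂ) - (ℓ:ℂ)) * conj (u2 x)) =
      (ℓ:ℂ) * (u3 0 * conj (u1 0)) := by
    rw [← intervalIntegral.integral_add hIA hIB, ← intervalIntegral.integral_add (hIA.add hIB) hIC]
    have := ibp_aux hℓ.le (f := fun x => u3 x * ((x:ℂ) - (ℓ:ℂ)) * conj (u1 x))
      (f' := fun x => u4 x * ((x:ℂ) - (ℓ:ℂ)) * conj (u1 x) + u3 x * conj (u1 x) +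
        u3 x * ((x:ℂ) - (ℓ:ℂ)) * conj (u2 x))
      (fun x hx => by
        have h := ((hu4 x hx).mul (hq x)).mul (hconj1 x hx)
        exact h.congr_deriv (by simp only [Pi.mul_apply]; ring)) ((hIA.add hIB).add hIC)
    rw [this]; push_cast; ring
  -- second IBP
  have e2 : (∫ x in (0:ℝ)..ℓ, u3 x * conj (u1 x)) +
      (∫ x in (0:ℝ)..ℓ, u2 x * conj (u2 x)) = -(u2 0 * conj (u1 0)) := by
    rw [← intervalIntegral.integral_add hIB hID]
    have := ibp_aux hℓ.le (f := fun x => u2 x * conj (u1 x))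
      (f' := fun x => u3 x * conj (u1 x) + u2 x * conj (u2 x))
      (fun x hx => (hu3 x hx).mul (hconj1 x hx)) (hIB.add hID)
    rw [this]; simp only [hbc, map_zero, mul_zero, zero_sub]
  -- third IBP (real)
  have e3 : (∫ x in (0:ℝ)..ℓ, ‖u2 x‖ ^ 2) +
      (∫ x in (0:ℝ)..ℓ, (x - ℓ) * (2 * (u3 x * conj (u2 x)).re)) = ℓ * ‖u2 0‖ ^ 2 := by
    rw [← intervalIntegral.integral_add hIJ hIK]
    have := ibp_aux hℓ.le (f := fun x => (x - ℓ) * ‖u2 x‖ ^ 2)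
      (f' := fun x => ‖u2 x‖ ^ 2 + (x - ℓ) * (2 * (u3 x * conj (u2 x)).re))
      (fun x hx => by
        have hre : HasDerivWithinAt (fun y => (u2 y).re) ((u3 x).re) (Set.Icc (0:ℝ) ℓ) x :=
          Complex.reCLM.hasFDerivAt.comp_hasDerivWithinAt x (hu3 x hx)
        have him : HasDerivWithinAt (fun y => (u2 y).im) ((u3 x).im) (Set.Icc (0:ℝ) ℓ) x :=
          Complex.imCLM.hasFDerivAt.comp_hasDerivWithinAt x (hu3 x hx)
        have hg : HasDerivWithinAt (fun y => (u2 y).re ^ 2 + (u2 y).im ^ 2)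
            (2 * (u2 x).re * (u3 x).re + 2 * (u2 x).im * (u3 x).im) (Set.Icc (0:ℝ) ℓ) x := by
          have := ((hre.pow 2).add (him.pow 2))
          exact this.congr_deriv (by ring)
        have hx1 : HasDerivWithinAt (fun y : ℝ => y - ℓ) 1 (Set.Icc (0:ℝ) ℓ) x :=
          ((hasDerivAt_id x).sub_const ℓ).hasDerivWithinAt
        have h := hx1.mul hg
        have hnorm : ∀ y : ℝ, ‖u2 y‖ ^ 2 = (u2 y).re ^ 2 + (u2 y).im ^ 2 := by
          intro y
          rw [Complex.sq_norm, Complex.normSq_apply]; ring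
        simp only [hnorm]
        refine h.congr_deriv ?_
        rw [Complex.mul_re, Complex.conj_re, Complex.conj_im]
        ring) (hIJ.add hIK)
    rw [this]; simp
  -- take real parts and push Re inside
  have hCre : (∫ x in (0:ℝ)..ℓ, u3 x * ((x:ℂ) - (ℓ:ℂ)) * conj (u2 x)).re =
      ∫ x in (0:ℝ)..ℓ, (x - ℓ) * (u3 x * conj (u2 x)).re := by
    have h := Complex.reCLM.intervalIntegral_comp_comm hIC
    simp only [Complex.reCLM_apply] at h
    rw [← h]
    apply intervalIntegral.integral_congr
    intro x _
    simp only [Complex.mul_re, Complex.mul_im, Complex.sub_re, Complex.sub_im,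
      Complex.ofReal_re, Complex.ofReal_im, Complex.conj_re, Complex.conj_im]
    ring
  have hDre : (∫ x in (0:ℝ)..ℓ, u2 x * conj (u2 x)).re = ∫ x in (0:ℝ)..ℓ, ‖u2 x‖ ^ 2 := by
    have h := Complex.reCLM.intervalIntegral_comp_comm hID
    simp only [Complex.reCLM_apply] at h
    rw [← h]
    apply intervalIntegral.integral_congr
    intro x _
    beta_reduce
    rw [Complex.sq_norm, Complex.normSq_apply,
      Complex.mul_re, Complex.conj_re, Complex.conj_im]
    ring
  have hKhalf : (∫ x in (0:ℝ)..ℓ, (x - ℓ) * (2 * (u3 x * conj (u2 x)).re)) =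
      2 * ∫ x in (0:ℝ)..ℓ, (x - ℓ) * (u3 x * conj (u2 x)).re := by
    rw [← intervalIntegral.integral_const_mul]
    congr 1; ext x; ring
  have re1 := congrArg Complex.re e1
  have re2 := congrArg Complex.re e2
  simp only [Complex.add_re, Complex.neg_re, Complex.re_ofReal_mul] at re1 re2
  rw [hCre] at re1
  rw [hDre] at re2
  rw [hKhalf] at e3
  linarith
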